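/- Let G be a finite group, H a subgroup of G, V a complex inner product space, and v : G → V. Then the following are equivalent: (1) for all x, y ∈ G, ⟪v x, v y⟫ = 1 if x⁻¹*y ∈ H and ⟪v x, v y⟫ = 0 otherwise; (2) every v x is a unit vector, v x = v y whenever x and y lie in the same left coset of H (i.e., x⁻¹*y ∈ H), and ⟪v x, v y⟫ = 0 whenever x⁻¹*y ∉ H. -/

import Mathlib

open scoped Classical in
theorem purification_characterization
    (G : Type*) [Group G] [Finite G] (H : Subgroup G)
    (V : Type*) [NormedAddCommGroup V] [InnerProductSpace ℂ V]
    (v : G → V) :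
    (∀ x y : G, inner ℂ (v x) (v y) =
        (if x⁻¹ * y ∈ H then (1 : ℂ) else 0)) ↔
      ((∀ x : G, ‖v x‖ = 1) ∧
       (∀ x y : G, x⁻¹ * y ∈ H → v x = v y) ∧
       (∀ x y : G, x⁻¹ * y ∉ H → inner ℂ (v x) (v y) = (0 : ℂ))) := by
  constructor
  · intro h
    have hn : ∀ x : G, ‖v x‖ = 1 := by
      intro x
      have := h x x
      simp only [inv_mul_cancel, Subgroup.one_mem, if_pos] at this
      have h1 : ‖v x‖^2 = 1 := by
        rw [← inner_self_eq_norm_sq (𝕜 := ℂ), this]; simp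
      nlinarith [norm_nonneg (v x), h1]
    refine ⟨hn, fun x y hxy => ?_, fun x y hxy => by simpa [hxy] using h x y⟩
    have h1 : inner ℂ (v x) (v y) = (1 : ℂ) := by simpa [hxy] using h x y
    exact (inner_eq_one_iff_of_norm_eq_one (hn x) (hn y)).mp h1
  · rintro ⟨hn, heq, hz⟩ x y
    by_cases hxy : x⁻¹ * y ∈ H
    · rw [if_pos hxy, ← heq x y hxy, inner_self_eq_norm_sq_to_K, hn x]
      norm_num
    · rw [if_neg hxy]; exact hz x y hxy
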